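/- arXiv:1811.01372 — 3 statements merged into one kernel-verified Lean document; each statement's English description precedes it below -/
import Mathlib

section
/- Let f : ℝⁿ → ℝⁿ be continuous, X ⊆ ℝⁿ, X_T ⊆ X, T > 0, and let v : [0,T] × ℝⁿ → ℝ be continuously differentiable with (∂v/∂t + ∇ₓv · f)(t,x) ≤ 0 for all (t,x) ∈ [0,T] × X, and v(T,x) ≥ 0 for all x ∈ X_T. If x₀ ∈ X admits a solution x(·) of ẋ = f(x) on [0,T] with x(0) = x₀, x(t) ∈ X for all t ∈ [0,T], and x(T) ∈ X_T, then v(0, x₀) ≥ 0. -/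
theorem stmt_5 {n : ℕ} (f : (Fin n → ℝ) → (Fin n → ℝ)) (hf : Continuous f)
    (X XT : Set (Fin n → ℝ)) (hXT : XT ⊆ X) (T : ℝ) (hT : 0 < T)
    (v : ℝ → (Fin n → ℝ) → ℝ)
    (hv : ContDiff ℝ 1 (Function.uncurry v))
    (hdecr : ∀ t ∈ Set.Icc (0 : ℝ) T, ∀ y ∈ X,
      fderiv ℝ (Function.uncurry v) (t, y) (1, f y) ≤ 0)
    (hvT : ∀ y ∈ XT, 0 ≤ v T y)
    (x₀ : Fin n → ℝ) (hx₀ : x₀ ∈ X)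
    (x : ℝ → (Fin n → ℝ))
    (hsol : ∀ t ∈ Set.Icc (0 : ℝ) T, HasDerivAt x (f (x t)) t)
    (hinit : x 0 = x₀)
    (hstay : ∀ t ∈ Set.Icc (0 : ℝ) T, x t ∈ X)
    (hfin : x T ∈ XT) :
    0 ≤ v 0 x₀ := by
  set g : ℝ → ℝ := fun t => v t (x t) with hg
  have hgderiv : ∀ t ∈ Set.Icc (0 : ℝ) T,
      HasDerivAt g (fderiv ℝ (Function.uncurry v) (t, x t) (1, f (x t))) t := by
    intro t ht
    have hcurve : HasDerivAt (fun s => (s, x s)) ((1 : ℝ), f (x t)) t :=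
      (hasDerivAt_id t).prodMk (hsol t ht)
    have hvdiff : DifferentiableAt ℝ (Function.uncurry v) (t, x t) :=
      (hv.differentiable one_ne_zero).differentiableAt
    exact (hvdiff.hasFDerivAt.comp_hasDerivAt t hcurve)
  have hanti : AntitoneOn g (Set.Icc 0 T) := by
    apply antitoneOn_of_deriv_nonpos (convex_Icc 0 T)
    · exact fun t ht => (hgderiv t ht).differentiableAt.continuousAt.continuousWithinAt
    · intro t ht
      rw [interior_Icc] at ht
      exact (hgderiv t (Set.mem_Icc_of_Ioo ht)).differentiableAt.differentiableWithinAt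
    · intro t ht
      rw [interior_Icc] at ht
      have ht' := Set.mem_Icc_of_Ioo ht
      rw [(hgderiv t ht').deriv]
      exact hdecr t ht' (x t) (hstay t ht')
  have h0 : (0:ℝ) ∈ Set.Icc (0:ℝ) T := Set.left_mem_Icc.2 hT.le
  have hTm : T ∈ Set.Icc (0:ℝ) T := Set.right_mem_Icc.2 hT.le
  have := hanti h0 hTm hT.le
  have hT0 : 0 ≤ g T := hvT (x T) hfin
  calc 0 ≤ g T := hT0
    _ ≤ g 0 := this
    _ = v 0 x₀ := by rw [hg]; simp [hinit]
end

section
/- Under the assumptions of the outer-approximation certificate (L v ≤ 0 on [0,T] × X and v(T,·) ≥ 0 on X_T), if in addition w : ℝⁿ → ℝ satisfies w(x) ≥ v(0,x) + 1 for all x ∈ X, then w(x₀) ≥ 1 for every x₀ in the region of attraction X₀. -/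
theorem stmt_6 {n : ℕ} (f : (Fin n → ℝ) → (Fin n → ℝ)) (hf : Continuous f)
    (X XT : Set (Fin n → ℝ)) (hXT : XT ⊆ X) (T : ℝ) (hT : 0 < T)
    (v : ℝ → (Fin n → ℝ) → ℝ)
    (hv : ContDiff ℝ 1 (Function.uncurry v))
    (hdecr : ∀ t ∈ Set.Icc (0 : ℝ) T, ∀ y ∈ X,
      fderiv ℝ (Function.uncurry v) (t, y) (1, f y) ≤ 0)
    (hvT : ∀ y ∈ XT, 0 ≤ v T y)
    (w : (Fin n → ℝ) → ℝ)
    (hw : ∀ y ∈ X, v 0 y + 1 ≤ w y)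
    (x₀ : Fin n → ℝ)
    (hx₀ : x₀ ∈ X ∧ ∃ x : ℝ → (Fin n → ℝ),
      (∀ t ∈ Set.Icc (0 : ℝ) T, HasDerivAt x (f (x t)) t) ∧
      x 0 = x₀ ∧ (∀ t ∈ Set.Icc (0 : ℝ) T, x t ∈ X) ∧ x T ∈ XT) :
    1 ≤ w x₀ := by
  obtain ⟨hx₀X, x, hxd, hx0, hxX, hxT⟩ := hx₀
  set g : ℝ → ℝ := fun t => v t (x t) with hg
  have hgd : ∀ t ∈ Set.Icc (0 : ℝ) T,
      HasDerivAt g (fderiv ℝ (Function.uncurry v) (t, x t) (1, f (x t))) t := by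
    intro t ht
    have h1 : HasDerivAt (fun s : ℝ => (s, x s)) ((1 : ℝ), f (x t)) t :=
      (hasDerivAt_id t).prodMk (hxd t ht)
    have h2 : HasFDerivAt (Function.uncurry v)
        (fderiv ℝ (Function.uncurry v) (t, x t)) (t, x t) :=
      (hv.differentiable one_ne_zero (t, x t)).hasFDerivAt
    exact h2.comp_hasDerivAt t h1
  have hcont : ContinuousOn g (Set.Icc 0 T) := fun t ht =>
    (hgd t ht).continuousAt.continuousWithinAt
  have hanti : AntitoneOn g (Set.Icc 0 T) := by
    apply antitoneOn_of_deriv_nonpos (convex_Icc 0 T) hcont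
    · intro t ht
      rw [interior_Icc] at ht
      exact ((hgd t (Set.mem_Icc_of_Ioo ht)).differentiableAt).differentiableWithinAt
    · intro t ht
      rw [interior_Icc] at ht
      have ht' := Set.mem_Icc_of_Ioo ht
      rw [(hgd t ht').deriv]
      exact hdecr t ht' (x t) (hxX t ht')
  have h1 : g T ≤ g 0 := hanti (Set.left_mem_Icc.2 hT.le) (Set.right_mem_Icc.2 hT.le) hT.le
  have h2 : 0 ≤ g T := hvT (x T) hxT
  have h3 : v 0 x₀ + 1 ≤ w x₀ := hw x₀ hx₀X
  have : (0:ℝ) ≤ v 0 x₀ := by rw [← hx0]; exact h2.trans h1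
  linarith
end

section
/- Under the dual certificate assumptions (L v ≤ 0 on [0,T]×X, v(T,·) ≥ 0 on X_T, w ≥ v(0,·)+1 on X, w ≥ 0 on X), the integral ∫_X w dλ is at least λ(X₀), the Lebesgue measure of the region of attraction, provided X₀ is measurable. -/
theorem stmt_7 {n : ℕ} (f : (Fin n → ℝ) → (Fin n → ℝ)) (hf : Continuous f)
    (X XT : Set (Fin n → ℝ)) (hXT : XT ⊆ X) (hX : IsCompact X)
    (hXm : MeasurableSet X) (T : ℝ) (hT : 0 < T)
    (v : ℝ → (Fin n → ℝ) → ℝ)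
    (hv : ContDiff ℝ 1 (Function.uncurry v))
    (hdecr : ∀ t ∈ Set.Icc (0 : ℝ) T, ∀ y ∈ X,
      fderiv ℝ (Function.uncurry v) (t, y) (1, f y) ≤ 0)
    (hvT : ∀ y ∈ XT, 0 ≤ v T y)
    (w : (Fin n → ℝ) → ℝ) (hwint : MeasureTheory.IntegrableOn w X)
    (hw : ∀ y ∈ X, v 0 y + 1 ≤ w y)
    (hwpos : ∀ y ∈ X, 0 ≤ w y)
    (X₀ : Set (Fin n → ℝ))
    (hX₀ : X₀ = {x₀ | x₀ ∈ X ∧ ∃ x : ℝ → (Fin n → ℝ),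
      (∀ t ∈ Set.Icc (0 : ℝ) T, HasDerivAt x (f (x t)) t) ∧
      x 0 = x₀ ∧ (∀ t ∈ Set.Icc (0 : ℝ) T, x t ∈ X) ∧ x T ∈ XT})
    (hX₀m : MeasurableSet X₀) :
    MeasureTheory.volume X₀ ≤ ENNReal.ofReal (∫ y in X, w y) := by
  have hsub : X₀ ⊆ X := by
    intro y hy; rw [hX₀] at hy; exact hy.1
  have hone : ∀ y ∈ X₀, (1 : ℝ) ≤ w y := by
    intro y hy
    rw [hX₀] at hy
    obtain ⟨hyX, x, hx, hx0, hxX, hxT⟩ := hy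
    have hg : ∀ t ∈ Set.Icc (0 : ℝ) T, HasDerivAt (fun t => v t (x t))
        (fderiv ℝ (Function.uncurry v) (t, x t) (1, f (x t))) t := by
      intro t ht
      have h1 : HasDerivAt (fun s => (s, x s)) ((1 : ℝ), f (x t)) t :=
        (hasDerivAt_id t).prodMk (hx t ht)
      have h2 : HasFDerivAt (Function.uncurry v)
          (fderiv ℝ (Function.uncurry v) (t, x t)) (t, x t) :=
        (hv.differentiable one_ne_zero (t, x t)).hasFDerivAt
      exact h2.comp_hasDerivAt t h1
    have hanti : AntitoneOn (fun t => v t (x t)) (Set.Icc 0 T) := by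
      apply antitoneOn_of_deriv_nonpos (convex_Icc 0 T)
      · intro t ht
        exact (hg t ht).continuousAt.continuousWithinAt
      · intro t ht
        rw [interior_Icc] at ht
        exact (hg t (Set.mem_Icc_of_Ioo ht)).differentiableAt.differentiableWithinAt
      · intro t ht
        rw [interior_Icc] at ht
        have ht' := Set.mem_Icc_of_Ioo ht
        rw [(hg t ht').deriv]
        exact hdecr t ht' (x t) (hxX t ht')
    have h0T : v T (x T) ≤ v 0 (x 0) :=
      hanti (Set.left_mem_Icc.2 hT.le) (Set.right_mem_Icc.2 hT.le) hT.le
    have hvT' : 0 ≤ v T (x T) := hvT _ hxT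
    have := hw y hyX
    rw [← hx0] at *
    linarith
  have hnn : ∀ᵐ y ∂(MeasureTheory.volume.restrict X), 0 ≤ w y := by
    filter_upwards [MeasureTheory.ae_restrict_mem hXm] with y hy using hwpos y hy
  calc MeasureTheory.volume X₀ = ∫⁻ _ in X₀, 1 := by simp
    _ ≤ ∫⁻ y in X₀, ENNReal.ofReal (w y) := by
        apply MeasureTheory.lintegral_mono_ae
        filter_upwards [MeasureTheory.ae_restrict_mem hX₀m] with y hy
        simpa using ENNReal.one_le_ofReal.2 (hone y hy)
    _ ≤ ∫⁻ y in X, ENNReal.ofReal (w y) := MeasureTheory.lintegral_mono_set hsub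
    _ = ENNReal.ofReal (∫ y in X, w y) :=
        (MeasureTheory.ofReal_integral_eq_lintegral_ofReal hwint hnn).symm
end
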